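/- Fix m ∈ ℕ, let n = m(m+1)/2, and define c_0,...,c_n by Π_{i=1}^m (1 - X^i) = Σ_i c_i X^i. For every non-empty subset S of {1,...,m} and every integer k > n, r(k,S) = - Σ_{j=k-n}^{k-1} c_{k-j} · r(j,S). -/

import Mathlib

/-- `rCount k S` is the number of partitions of `k` whose set of parts is exactly `S`. -/
noncomputable def rCount (k : ℕ) (S : Finset ℕ) : ℕ :=
  Nat.card {P : Nat.Partition k // P.parts.toFinset = S}

noncomputable def Gs (i : ℕ) : PowerSeries ℤ :=
  PowerSeries.mk fun n => if n ≠ 0 ∧ i ∣ n then 1 else 0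

lemma Gs_mul (i : ℕ) (hi : 0 < i) :
    Gs i * (1 - PowerSeries.X ^ i) = PowerSeries.X ^ i := by
  ext n
  rw [mul_sub, mul_one, map_sub, PowerSeries.coeff_mul_X_pow', PowerSeries.coeff_X_pow]
  simp only [Gs, PowerSeries.coeff_mk]
  rcases le_or_gt i n with h | h
  · have h1 : i ∣ n ↔ i ∣ n - i := by
      constructor
      · exact fun d => Nat.dvd_sub d dvd_rfl
      · intro d
        have := Nat.dvd_add d (dvd_refl i)
        rwa [Nat.sub_add_cancel h] at this
    by_cases hd : i ∣ n
    · by_cases hn : n = i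
      · subst hn
        simp [Nat.sub_self, hi.ne', hd]
      · have h2 : n - i ≠ 0 := by omega
        have h3 : n ≠ 0 := by omega
        simp [hd, h1.mp hd, hn, h2, h3, h]
    · have h2 : ¬ i ∣ n - i := fun d => hd (h1.mpr d)
      have hn : n ≠ i := by rintro rfl; exact hd dvd_rfl
      simp [hd, h2, hn, h]
  · have hn : n ≠ i := by omega
    have h2 : ¬(n ≠ 0 ∧ i ∣ n) := by
      rintro ⟨h0, hd⟩
      exact absurd (Nat.le_of_dvd (Nat.pos_of_ne_zero h0) hd) (by omega)
    simp [h2, hn, not_le.mpr h]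

noncomputable def pToF (k : ℕ) (S : Finset ℕ) (P : Nat.Partition k) : ℕ →₀ ℕ :=
  Finsupp.onFinset S (fun i => if i ∈ S then i * P.parts.count i else 0)
    (fun _ ha => by_contra fun h => ha (if_neg h))

lemma pToF_apply (k : ℕ) (S : Finset ℕ) (P : Nat.Partition k) (a : ℕ) :
    pToF k S P a = if a ∈ S then a * P.parts.count a else 0 := rfl

open Finset in
lemma rCount_eq_card (k : ℕ) (S : Finset ℕ) (hpos : ∀ i ∈ S, 0 < i) :
    rCount k S =
      ((S.finsuppAntidiag k).filter (fun l => ∀ i ∈ S, l i ≠ 0 ∧ i ∣ l i)).card := by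
  classical
  rw [rCount, ← Nat.card_eq_finsetCard]
  have hmem : ∀ P : {P : Nat.Partition k // P.parts.toFinset = S},
      pToF k S P.1 ∈ (S.finsuppAntidiag k).filter (fun l => ∀ i ∈ S, l i ≠ 0 ∧ i ∣ l i) := by
    rintro ⟨P, hP⟩
    simp only [Finset.mem_filter, Finset.mem_finsuppAntidiag]
    refine ⟨⟨?_, Finsupp.support_onFinset_subset⟩, ?_⟩
    · have h1 : S.sum ⇑(pToF k S P) = ∑ i ∈ S, i * P.parts.count i :=
        Finset.sum_congr rfl fun i hi => by simp [pToF_apply, hi]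
      rw [h1, ← hP]
      have h2 := Finset.sum_multiset_map_count P.parts (id : ℕ → ℕ)
      rw [Multiset.map_id] at h2
      calc ∑ i ∈ P.parts.toFinset, i * Multiset.count i P.parts
          = P.parts.sum := by
            rw [h2]; exact Finset.sum_congr rfl fun i _ => by simp [mul_comm]
        _ = k := P.parts_sum
    · intro i hi
      have hc : P.parts.count i ≠ 0 := by
        apply Multiset.count_ne_zero.mpr
        rw [← Multiset.mem_toFinset, hP]
        exact hi
      rw [pToF_apply, if_pos hi]
      exact ⟨Nat.mul_ne_zero (hpos i hi).ne' hc, Dvd.intro _ rfl⟩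
  refine Nat.card_eq_of_bijective (fun P => ⟨pToF k S P.1, hmem P⟩) ⟨?_, ?_⟩
  · rintro ⟨P, hP⟩ ⟨Q, hQ⟩ hPQ
    have hv : ∀ a, (if a ∈ S then a * P.parts.count a else 0)
        = (if a ∈ S then a * Q.parts.count a else 0) := by
      intro a
      have := congrArg (fun f => (f.1 : ℕ →₀ ℕ) a) hPQ
      simpa [pToF_apply] using this
    apply Subtype.ext; apply Nat.Partition.ext; ext a
    by_cases h : a ∈ S
    · have := hv a
      rw [if_pos h, if_pos h] at this
      exact Nat.eq_of_mul_eq_mul_left (hpos a h) this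
    · have h1 : P.parts.count a = 0 := by
        rw [Multiset.count_eq_zero, ← Multiset.mem_toFinset, hP]; exact h
      have h2 : Q.parts.count a = 0 := by
        rw [Multiset.count_eq_zero, ← Multiset.mem_toFinset, hQ]; exact h
      rw [h1, h2]
  · rintro ⟨l, hl⟩
    rw [Finset.mem_filter, Finset.mem_finsuppAntidiag] at hl
    obtain ⟨⟨hsum, hsupp⟩, hall⟩ := hl
    refine ⟨⟨⟨∑ i ∈ S, Multiset.replicate (l i / i) i, ?_, ?_⟩, ?_⟩, ?_⟩
    · intro j hj
      rw [Multiset.mem_sum] at hj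
      obtain ⟨i, hi, hji⟩ := hj
      rw [Multiset.eq_of_mem_replicate hji]
      exact hpos i hi
    · rw [Multiset.sum_sum]
      have : ∀ i ∈ S, (Multiset.replicate (l i / i) i).sum = l i := by
        intro i hi
        rw [Multiset.sum_replicate, smul_eq_mul, Nat.div_mul_cancel (hall i hi).2]
      rw [Finset.sum_congr rfl this]
      exact hsum
    · ext a
      simp only [Multiset.mem_toFinset, Multiset.mem_sum]
      constructor
      · rintro ⟨i, hi, hai⟩
        rw [Multiset.eq_of_mem_replicate hai]; exact hi
      · intro ha
        refine ⟨a, ha, ?_⟩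
        rw [Multiset.mem_replicate]
        have h0 : l a ≠ 0 := (hall a ha).1
        refine ⟨?_, rfl⟩
        have := Nat.div_pos (Nat.le_of_dvd (Nat.pos_of_ne_zero h0) (hall a ha).2) (hpos a ha)
        omega
    · apply Subtype.ext
      ext a
      rw [pToF_apply]
      rw [Multiset.count_sum']
      have hcount : ∀ i ∈ S, Multiset.count a (Multiset.replicate (l i / i) i)
          = if i = a then l i / i else 0 := fun i _ => Multiset.count_replicate _ _ _
      rw [Finset.sum_congr rfl hcount, Finset.sum_ite_eq' S a (fun i => l i / i)]
      by_cases h : a ∈ S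
      · simp only [if_pos h]; rw [Nat.mul_div_cancel' (hall a h).2]
      · simp only [if_neg h]
        exact (Finsupp.notMem_support_iff.mp (fun hm => h (hsupp hm))).symm

lemma F_eq (S : Finset ℕ) (hpos : ∀ i ∈ S, 0 < i) :
    (∏ i ∈ S, Gs i) = PowerSeries.mk fun k => (rCount k S : ℤ) := by
  classical
  ext k
  rw [PowerSeries.coeff_mk, PowerSeries.coeff_prod, rCount_eq_card k S hpos]
  simp only [Gs, PowerSeries.coeff_mk]
  rw [Finset.sum_congr rfl fun l _ => Finset.prod_boole (p := fun i => l i ≠ 0 ∧ i ∣ l i)]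
  rw [Finset.sum_boole]

/-- Fix `m`, let `n = m(m+1)/2` and let `c_i` be the coefficients of
`∏_{i=1}^m (1 - Xⁱ)`. For every non-empty `S ⊆ {1,...,m}` and every `k > n`,
`r(k,S) = - ∑_{j=k-n}^{k-1} c_{k-j} r(j,S)`. -/
theorem rCount_recurrence (m : ℕ) (S : Finset ℕ) (hS : S.Nonempty)
    (hSm : S ⊆ Finset.Icc 1 m) (k : ℕ) (hk : m * (m + 1) / 2 < k) :
    (rCount k S : ℤ) =
      - ∑ j ∈ Finset.Ico (k - m * (m + 1) / 2) k,
          (∏ i ∈ Finset.Icc 1 m, (1 - Polynomial.X ^ i : Polynomial ℤ)).coeff (k - j) *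
            (rCount j S : ℤ) := by
  classical
  set n := m * (m + 1) / 2 with hn
  set Δ : Polynomial ℤ := ∏ i ∈ Finset.Icc 1 m, (1 - Polynomial.X ^ i) with hΔ
  have hpos : ∀ i ∈ S, 0 < i := fun i hi => (Finset.mem_Icc.mp (hSm hi)).1
  have hdeg1 : ∀ i : ℕ, (1 - Polynomial.X ^ i : Polynomial ℤ).natDegree ≤ i := fun i =>
    le_trans (Polynomial.natDegree_sub_le _ _) (by simp [Polynomial.natDegree_X_pow])
  have hsum_le : ∑ i ∈ Finset.Icc 1 m, i = n := by
    have h1 : Finset.Icc 1 m = Finset.Ico 1 (m + 1) := (Finset.Ico_add_one_right_eq_Icc 1 m).symm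
    have h3 : ∑ i ∈ Finset.range (m + 1), i = 0 + ∑ i ∈ Finset.Ico 1 (m + 1), i := by
      rw [Finset.range_eq_Ico, Finset.sum_eq_sum_Ico_succ_bot (by omega)]
    have h2 : ∑ i ∈ Finset.range (m + 1), i = (m + 1) * m / 2 := by
      simpa using Finset.sum_range_id (m + 1)
    calc ∑ i ∈ Finset.Icc 1 m, i = ∑ i ∈ Finset.Ico 1 (m + 1), i := by rw [h1]
      _ = ∑ i ∈ Finset.range (m + 1), i := (h3.trans (zero_add _)).symm
      _ = (m + 1) * m / 2 := h2
      _ = n := by rw [hn, Nat.mul_comm]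
  have hdegΔ : Δ.natDegree ≤ n := by
    rw [hΔ]
    exact le_trans (Polynomial.natDegree_prod_le _ _)
      (le_trans (Finset.sum_le_sum fun i _ => hdeg1 i) hsum_le.le)
  -- the key vanishing of coefficients
  have key : (PowerSeries.coeff k)
      ((Δ : PowerSeries ℤ) * PowerSeries.mk fun j => (rCount j S : ℤ)) = 0 := by
    have hΔc : ((Δ : Polynomial ℤ) : PowerSeries ℤ)
        = ∏ i ∈ Finset.Icc 1 m, (1 - PowerSeries.X ^ i) := by
      rw [hΔ, ← Polynomial.coeToPowerSeries.ringHom_apply, map_prod]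
      exact Finset.prod_congr rfl fun i _ => by
        simp [Polynomial.coeToPowerSeries.ringHom_apply, Polynomial.coe_sub,
          Polynomial.coe_one, Polynomial.coe_pow, Polynomial.coe_X]
    have hsplit : ∏ i ∈ Finset.Icc 1 m, (1 - PowerSeries.X ^ i : PowerSeries ℤ)
        = (∏ i ∈ Finset.Icc 1 m \ S, (1 - PowerSeries.X ^ i)) *
            ∏ i ∈ S, (1 - PowerSeries.X ^ i) := (Finset.prod_sdiff hSm).symm
    have hS2 : (∏ i ∈ S, (1 - PowerSeries.X ^ i : PowerSeries ℤ)) * ∏ i ∈ S, Gs i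
        = PowerSeries.X ^ (∑ i ∈ S, i) := by
      have hfac : ∀ i ∈ S, (1 - PowerSeries.X ^ i) * Gs i = PowerSeries.X ^ i := by
        intro i hi
        rw [mul_comm]
        exact Gs_mul i (hpos i hi)
      rw [← Finset.prod_mul_distrib, Finset.prod_congr rfl hfac]
      exact Finset.prod_pow_eq_pow_sum S (fun i => i) _
    have hq : ((((∏ i ∈ Finset.Icc 1 m \ S, (1 - Polynomial.X ^ i)) *
          Polynomial.X ^ (∑ i ∈ S, i) : Polynomial ℤ)) : PowerSeries ℤ)
        = (Δ : PowerSeries ℤ) * PowerSeries.mk fun j => (rCount j S : ℤ) := by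
      rw [hΔc, ← F_eq S hpos, hsplit, mul_assoc, hS2,
        ← Polynomial.coeToPowerSeries.ringHom_apply, map_mul, map_prod, map_pow]
      congr 1
      · exact Finset.prod_congr rfl fun i _ => by
          simp [Polynomial.coeToPowerSeries.ringHom_apply, Polynomial.coe_sub,
            Polynomial.coe_one, Polynomial.coe_pow, Polynomial.coe_X]
      · simp [Polynomial.coeToPowerSeries.ringHom_apply, Polynomial.coe_X]
    rw [← hq, Polynomial.coeff_coe]
    apply Polynomial.coeff_eq_zero_of_natDegree_lt
    have hqdeg : ((∏ i ∈ Finset.Icc 1 m \ S, (1 - Polynomial.X ^ i)) *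
          Polynomial.X ^ (∑ i ∈ S, i) : Polynomial ℤ).natDegree ≤ n := by
      refine le_trans (Polynomial.natDegree_mul_le) ?_
      have hA : (∏ i ∈ Finset.Icc 1 m \ S, (1 - Polynomial.X ^ i : Polynomial ℤ)).natDegree
          ≤ ∑ i ∈ Finset.Icc 1 m \ S, i :=
        le_trans (Polynomial.natDegree_prod_le _ _) (Finset.sum_le_sum fun i _ => hdeg1 i)
      have hB : (Polynomial.X ^ (∑ i ∈ S, i) : Polynomial ℤ).natDegree = ∑ i ∈ S, i :=
        Polynomial.natDegree_X_pow _
      calc _ ≤ (∑ i ∈ Finset.Icc 1 m \ S, i) + ∑ i ∈ S, i := add_le_add hA hB.le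
        _ = ∑ i ∈ Finset.Icc 1 m, i := Finset.sum_sdiff hSm
        _ = n := hsum_le
    omega
  rw [PowerSeries.coeff_mul] at key
  simp only [Polynomial.coeff_coe, PowerSeries.coeff_mk] at key
  rw [Finset.Nat.sum_antidiagonal_eq_sum_range_succ_mk] at key
  rw [Finset.range_eq_Ico, Finset.sum_eq_sum_Ico_succ_bot (Nat.succ_pos k)] at key
  have hc0 : Δ.coeff 0 = 1 := by
    rw [Polynomial.coeff_zero_eq_eval_zero, hΔ, Polynomial.eval_prod]
    apply Finset.prod_eq_one
    intro i hi
    have hi0 : i ≠ 0 := by have := (Finset.mem_Icc.mp hi).1; omega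
    simp [zero_pow hi0]
  have hsub : ∑ i ∈ Finset.Ico 1 (k + 1), Δ.coeff i * (rCount (k - i) S : ℤ)
      = ∑ i ∈ Finset.Ico 1 (n + 1), Δ.coeff i * (rCount (k - i) S : ℤ) := by
    refine (Finset.sum_subset ?_ ?_).symm
    · intro x hx
      rw [Finset.mem_Ico] at hx ⊢
      omega
    · intro x hx hnx
      rw [Finset.mem_Ico] at hx hnx
      have : n < x := by omega
      rw [Polynomial.coeff_eq_zero_of_natDegree_lt (lt_of_le_of_lt hdegΔ this), zero_mul]
  have hre : ∑ i ∈ Finset.Ico 1 (n + 1), Δ.coeff i * (rCount (k - i) S : ℤ)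
      = ∑ j ∈ Finset.Ico (k - n) k, Δ.coeff (k - j) * (rCount j S : ℤ) := by
    refine Finset.sum_nbij' (fun i => k - i) (fun j => k - j) ?_ ?_ ?_ ?_ ?_
    · intro a ha
      simp only [Finset.mem_Ico] at ha ⊢
      omega
    · intro a ha
      simp only [Finset.mem_Ico] at ha ⊢
      omega
    · intro a ha
      simp only [Finset.mem_Ico] at ha
      show k - (k - a) = a
      omega
    · intro a ha
      simp only [Finset.mem_Ico] at ha
      show k - (k - a) = a
      omega
    · intro a ha
      simp only [Finset.mem_Ico] at ha
      show Δ.coeff a * (rCount (k - a) S : ℤ) = Δ.coeff (k - (k - a)) * (rCount (k - a) S : ℤ)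
      rw [show k - (k - a) = a by omega]
  rw [hsub, hre, hc0, one_mul, Nat.sub_zero] at key
  linarith
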